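/- If γ is an accepting strategy word for a 2AFW A on a word w, then the cycle annotation η — where η(j) consists of all triples (q,f,q') such that some path segment of γ starts at (j,q), ends at (j,q'), has length > 1, and f = 1 exactly when the segment visits an accepting state excluding its first state — is an accepting annotation of γ. -/

import Mathlib

/-- Positive Boolean formulas over `X` (with `true` and `false`, no negation). -/
inductive PBF (X : Type) where
  | tru : PBF X
  | fls : PBF X
  | var : X → PBF X
  | conj : PBF X → PBF X → PBF X
  | disj : PBF X → PBF X → PBF X

/-- A set `M ⊆ X` satisfies a positive Boolean formula. -/
def PBF.satBy {X : Type} (M : Set X) : PBF X → Prop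
  | .tru => True
  | .fls => False
  | .var x => x ∈ M
  | .conj a b => a.satBy M ∧ b.satBy M
  | .disj a b => a.satBy M ∨ b.satBy M

/-- Directions of a two-way automaton: −1, 0, 1. -/
inductive Dir where
  | back : Dir
  | stay : Dir
  | fwd : Dir
deriving DecidableEq

/-- Applying a direction to a position (undefined when moving left of 0). -/
def Dir.apply : Dir → ℕ → Option ℕ
  | .back, 0 => none
  | .back, i + 1 => some i
  | .stay, i => some i
  | .fwd, i => some (i + 1)

/-- A two-way alternating automaton on finite words `(Q, Σ, δ, q₀, F)`. -/
structure TAFW (Q A : Type) where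
  delta : Q → A → PBF (Q × Dir)
  start : Q
  acc : Set Q

/-- Configurations of a 2AFW: a state with a read position, or `Accept`. -/
inductive Config (Q : Type) where
  | conf : Q → ℕ → Config Q
  | accept : Config Q

variable {Q A : Type}

/-- `ρ` (a partial labelling of the tree of finite index sequences) is a run of
the 2AFW `M` on `w` from position `k`. -/
structure IsRun (M : TAFW Q A) (w : List A) (k : ℕ)
    (ρ : List ℕ → Option (Config Q)) : Prop where
  root : ρ [] = some (.conf M.start k)
  tree : ∀ x n, (ρ (x ++ [n])).isSome → (ρ x).isSome
  accept_leaf : ∀ x, ρ x = some .accept → ∀ n, ρ (x ++ [n]) = none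
  node : ∀ x q i, ρ x = some (.conf q i) → ∃ a, w[i]? = some a ∧
    ((M.delta q a = .fls ∧ ∀ n, ρ (x ++ [n]) = none) ∨
     (M.delta q a = .tru ∧ (∃ n, ρ (x ++ [n]) = some .accept) ∧
        ∀ n c, ρ (x ++ [n]) = some c → c = .accept) ∨
     (M.delta q a ≠ .tru ∧ M.delta q a ≠ .fls ∧
       ∃ S : Set (Q × Dir), (M.delta q a).satBy S ∧
         (∀ τ ∈ S, ∃ n j, τ.2.apply i = some j ∧ ρ (x ++ [n]) = some (.conf τ.1 j)) ∧
         (∀ n c, ρ (x ++ [n]) = some c →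
            ∃ τ ∈ S, ∃ j, τ.2.apply i = some j ∧ c = .conf τ.1 j)))

/-- A leaf of the run tree. -/
def IsLeaf (ρ : List ℕ → Option (Config Q)) (x : List ℕ) : Prop :=
  (ρ x).isSome ∧ ∀ n, ρ (x ++ [n]) = none

/-- An infinite branch of the run tree, given by successive child indices. -/
def InfBranch (ρ : List ℕ → Option (Config Q)) (b : ℕ → ℕ) : Prop :=
  ∀ n, (ρ ((List.range n).map b)).isSome

/-- A run is accepting when every finite branch ends in `Accept` and every
infinite branch has some accepting state occurring infinitely often. -/
def AcceptingRun (M : TAFW Q A) (w : List A) (k : ℕ)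
    (ρ : List ℕ → Option (Config Q)) : Prop :=
  IsRun M w k ρ ∧
  (∀ x, IsLeaf ρ x → ρ x = some .accept) ∧
  (∀ b, InfBranch ρ b →
    ∃ f ∈ M.acc, ∀ N, ∃ n ≥ N, ∃ i, ρ ((List.range n).map b) = some (.conf f i))

/-- The 2AFW `M` accepts `w` from position `k`. -/
def TAFW.Accepts (M : TAFW Q A) (w : List A) (k : ℕ) : Prop :=
  ∃ ρ, AcceptingRun M w k ρ
variable {Q A : Type}

/-- Origin states of a label of a strategy word. -/
def originSet (l : Set (Q × Dir × Q)) : Set Q := {q | ∃ d q', (q, d, q') ∈ l}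

/-- `γ` is a strategy word for the 2AFW `M` on the input word `w`. -/
structure StrategyOn (M : TAFW Q A) (w : List A) (γ : ℕ → Set (Q × Dir × Q)) : Prop where
  init : M.start ∈ originSet (γ 0)
  no_back0 : ∀ t ∈ γ 0, t.2.1 ≠ Dir.back
  no_fwd_last : ∀ t ∈ γ (w.length - 1), t.2.1 ≠ Dir.fwd
  trans_sat : ∀ u, u < w.length → ∀ q ∈ originSet (γ u), ∀ a, w[u]? = some a →
    (M.delta q a).satBy {τ : Q × Dir | (q, τ.2, τ.1) ∈ γ u}

/-- One step between (position, state) pairs following a transition of `γ`. -/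
def PathStep (γ : ℕ → Set (Q × Dir × Q)) (c c' : ℕ × Q) : Prop :=
  ∃ d, (c.2, d, c'.2) ∈ γ c.1 ∧ d.apply c.1 = some c'.1

/-- A (maximal) finite path in the strategy word `γ`. -/
def IsFinPath (w : List A) (γ : ℕ → Set (Q × Dir × Q)) (β : List (ℕ × Q)) : Prop :=
  β ≠ [] ∧ (∀ e ∈ β, e.1 < w.length) ∧
  (∀ m, ∀ h : m + 1 < β.length,
    PathStep γ (β.get ⟨m, by omega⟩) (β.get ⟨m + 1, h⟩)) ∧
  (∀ l, β.getLast? = some l → ¬ ∃ c', PathStep γ l c')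

/-- A finite path is accepting when the transition formula at its final
configuration is `true`. -/
def FinPathAccepting (M : TAFW Q A) (w : List A) (β : List (ℕ × Q)) : Prop :=
  ∀ l, β.getLast? = some l → ∀ a, w[l.1]? = some a → M.delta l.2 a = PBF.tru

/-- An infinite path in the strategy word `γ`. -/
def IsInfPath (γ : ℕ → Set (Q × Dir × Q)) (β : ℕ → ℕ × Q) : Prop :=
  ∀ n, PathStep γ (β n) (β (n + 1))

/-- An infinite path is accepting when some accepting state occurs infinitely
often in it. -/
def InfPathAccepting (M : TAFW Q A) (β : ℕ → ℕ × Q) : Prop :=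
  ∃ f ∈ M.acc, ∀ N, ∃ n ≥ N, (β n).2 = f

/-- An accepting strategy word: all of its paths are accepting. -/
def AcceptingStrategy (M : TAFW Q A) (w : List A) (γ : ℕ → Set (Q × Dir × Q)) : Prop :=
  StrategyOn M w γ ∧
  (∀ β, IsFinPath w γ β → FinPathAccepting M w β) ∧
  (∀ β, IsInfPath γ β → InfPathAccepting M β)
/-- `final(q)`: `true` iff `q` is an accepting state. -/
noncomputable def finalB (M : TAFW Q A) (q : Q) : Bool :=
  @decide (q ∈ M.acc) (Classical.dec _)

/-- `η` is an annotation of the strategy word `γ` (closure conditions 1–4). -/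
structure IsAnnotation (M : TAFW Q A) (w : List A) (γ : ℕ → Set (Q × Dir × Q))
    (η : ℕ → Set (Q × Bool × Q)) : Prop where
  c1 : ∀ u < w.length, ∀ q q', (q, Dir.stay, q') ∈ γ u →
        (q, finalB M q', q') ∈ η u
  c2 : ∀ u, u + 1 < w.length → ∀ q q' q'', (q, Dir.fwd, q') ∈ γ u →
        (q', Dir.back, q'') ∈ γ (u + 1) →
        (q, finalB M q' || finalB M q'', q'') ∈ η u
  c3 : ∀ u, 0 < u → u < w.length → ∀ q q' q'', (q, Dir.back, q') ∈ γ u →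
        (q', Dir.fwd, q'') ∈ γ (u - 1) →
        (q, finalB M q' || finalB M q'', q'') ∈ η u
  c4 : ∀ u < w.length, ∀ q f₁ q' f₂ q'', (q, f₁, q') ∈ η u → (q', f₂, q'') ∈ η u →
        (q, f₁ || f₂, q'') ∈ η u

/-- An annotation is accepting if it has no element of the form `(q,0,q)`. -/
def AnnAccepting (w : List A) (η : ℕ → Set (Q × Bool × Q)) : Prop :=
  ∀ u < w.length, ∀ q : Q, (q, false, q) ∉ η u

/-- A path segment of `γ`: consecutive elements are linked by transitions. -/
def IsSeg {Q : Type} (γ : ℕ → Set (Q × Dir × Q)) (β : List (ℕ × Q)) : Prop :=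
  ∀ m, ∀ h : m + 1 < β.length, PathStep γ (β.get ⟨m, by omega⟩) (β.get ⟨m + 1, h⟩)

/-- The cycle annotation of a strategy word `γ`: `(q,f,q') ∈ η(j)` iff some
path segment of `γ` of length > 1 starts at `(j,q)`, ends at `(j,q')`, and
`f = 1` exactly when it visits an accepting state (excluding its first
element). -/
def cycAnn {Q A : Type} (M : TAFW Q A) (γ : ℕ → Set (Q × Dir × Q)) :
    ℕ → Set (Q × Bool × Q) := fun j =>
  {t | ∃ β : List (ℕ × Q), IsSeg γ β ∧ 2 ≤ β.length ∧
    β.head? = some (j, t.1) ∧ β.getLast? = some (j, t.2.2) ∧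
    (t.2.1 = true ↔ ∃ m, ∃ h : m < β.length, 0 < m ∧ (β.get ⟨m, h⟩).2 ∈ M.acc)}


lemma finalB_true_iff {Q A : Type} (M : TAFW Q A) (q : Q) :
    finalB M q = true ↔ q ∈ M.acc := by
  simp [finalB]

lemma mem_cycAnn_iff {Q A : Type} (M : TAFW Q A) (γ : ℕ → Set (Q × Dir × Q))
    (j : ℕ) (q : Q) (f : Bool) (q' : Q) :
    (q, f, q') ∈ cycAnn M γ j ↔ ∃ n : ℕ, 1 ≤ n ∧ ∃ g : ℕ → ℕ × Q,
      (∀ m < n, PathStep γ (g m) (g (m + 1))) ∧ g 0 = (j, q) ∧ g n = (j, q') ∧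
      (f = true ↔ ∃ m, 0 < m ∧ m ≤ n ∧ (g m).2 ∈ M.acc) := by
  constructor
  · rintro ⟨β, hseg, hlen, hhead, hlast, hiff⟩
    have hL : 0 < β.length := by omega
    refine ⟨β.length - 1, by omega,
      fun m => β.get ⟨min m (β.length - 1), by omega⟩, ?_, ?_, ?_, ?_⟩
    · intro m hm
      have h1 : min m (β.length - 1) = m := by omega
      have h2 : min (m + 1) (β.length - 1) = m + 1 := by omega
      simp only [h1, h2]
      exact hseg m (by omega)
    · have h1 : min 0 (β.length - 1) = 0 := by omega
      simp only [h1]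
      have := (List.head?_eq_getElem? : β.head? = β[0]?)
      rw [hhead] at this
      have h2 : β[0]? = some β[0] := List.getElem?_eq_getElem hL
      rw [h2] at this
      simpa [List.get_eq_getElem] using this.symm
    · have h1 : min (β.length - 1) (β.length - 1) = β.length - 1 := by omega
      simp only [h1]
      have := (List.getLast?_eq_getElem? : β.getLast? = β[β.length - 1]?)
      rw [hlast] at this
      have h2 : β[β.length - 1]? = some β[β.length - 1] :=
        List.getElem?_eq_getElem (by omega)
      rw [h2] at this
      simpa [List.get_eq_getElem] using this.symm
    · rw [hiff]
      constructor
      · rintro ⟨m, hm, hm0, hacc⟩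
        refine ⟨m, hm0, by omega, ?_⟩
        have h1 : min m (β.length - 1) = m := by omega
        simp only [h1]
        exact hacc
      · rintro ⟨m, hm0, hmn, hacc⟩
        refine ⟨m, by omega, hm0, ?_⟩
        have h1 : min m (β.length - 1) = m := by omega
        simp only [h1] at hacc
        exact hacc
  · rintro ⟨n, hn, g, hstep, hg0, hgn, hiff⟩
    refine ⟨(List.range (n + 1)).map g, ?_, by simp; omega, ?_, ?_, ?_⟩
    · intro m h
      have hlen : ((List.range (n + 1)).map g).length = n + 1 := by simp
      have hm : m + 1 < n + 1 := by omega
      have e1 : ((List.range (n + 1)).map g).get ⟨m, by omega⟩ = g m := by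
        simp [List.get_eq_getElem]
      have e2 : ((List.range (n + 1)).map g).get ⟨m + 1, h⟩ = g (m + 1) := by
        simp [List.get_eq_getElem]
      rw [e1, e2]
      exact hstep m (by omega)
    · rw [List.head?_eq_getElem?]
      have : ((List.range (n + 1)).map g)[0]? = some (g 0) := by
        simp
      rw [this, hg0]
    · rw [List.getLast?_eq_getElem?]
      have hlen : ((List.range (n + 1)).map g).length = n + 1 := by simp
      rw [hlen]
      have : ((List.range (n + 1)).map g)[n + 1 - 1]? = some (g n) := by
        simp
      rw [this, hgn]
    · rw [hiff]
      have hlen : ((List.range (n + 1)).map g).length = n + 1 := by simp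
      constructor
      · rintro ⟨m, hm0, hmn, hacc⟩
        refine ⟨m, by omega, hm0, ?_⟩
        simpa [List.get_eq_getElem] using hacc
      · rintro ⟨m, hm, hm0, hacc⟩
        refine ⟨m, hm0, by rw [hlen] at hm; omega, ?_⟩
        simpa [List.get_eq_getElem] using hacc

/-- if `γ` is an accepting strategy word, the cycle annotation
is an accepting annotation of `γ`. -/
theorem cycle_annotation_accepting {Q A : Type} (M : TAFW Q A) (w : List A)
    (γ : ℕ → Set (Q × Dir × Q)) (hγ : AcceptingStrategy M w γ) :
    IsAnnotation M w γ (cycAnn M γ) ∧ AnnAccepting w (cycAnn M γ) :=  by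
  constructor
  · constructor
    · -- c1
      intro u hu q q' ht
      rw [mem_cycAnn_iff]
      refine ⟨1, le_refl 1, fun m => if m = 0 then (u, q) else (u, q'), ?_, by simp, by simp, ?_⟩
      · intro m hm
        interval_cases m
        exact ⟨Dir.stay, by simpa using ht, rfl⟩
      · simp only [finalB_true_iff]
        constructor
        · intro h
          exact ⟨1, by omega, le_refl 1, by simpa using h⟩
        · rintro ⟨m, hm0, hm1, hacc⟩
          have : m = 1 := by omega
          subst this
          simpa using hacc
    · -- c2
      intro u hu q q' q'' h1 h2
      rw [mem_cycAnn_iff]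
      refine ⟨2, by omega,
        fun m => if m = 0 then (u, q) else if m = 1 then (u + 1, q') else (u, q''),
        ?_, by simp, by simp, ?_⟩
      · intro m hm
        interval_cases m
        · exact ⟨Dir.fwd, by simpa using h1, rfl⟩
        · exact ⟨Dir.back, by simpa using h2, rfl⟩
      · simp only [Bool.or_eq_true, finalB_true_iff]
        constructor
        · rintro (h | h)
          · exact ⟨1, by omega, by omega, by simpa using h⟩
          · exact ⟨2, by omega, by omega, by simpa using h⟩
        · rintro ⟨m, hm0, hm2, hacc⟩
          interval_cases m
          · left; simpa using hacc
          · right; simpa using hacc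
    · -- c3
      intro u hu0 hu q q' q'' h1 h2
      rw [mem_cycAnn_iff]
      refine ⟨2, by omega,
        fun m => if m = 0 then (u, q) else if m = 1 then (u - 1, q') else (u, q''),
        ?_, by simp, by simp, ?_⟩
      · intro m hm
        interval_cases m
        · refine ⟨Dir.back, by simpa using h1, ?_⟩
          obtain ⟨v, rfl⟩ : ∃ v, u = v + 1 := ⟨u - 1, by omega⟩
          simp [Dir.apply]
        · refine ⟨Dir.fwd, by simpa using h2, ?_⟩
          simp [Dir.apply]
          omega
      · simp only [Bool.or_eq_true, finalB_true_iff]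
        constructor
        · rintro (h | h)
          · exact ⟨1, by omega, by omega, by simpa using h⟩
          · exact ⟨2, by omega, by omega, by simpa using h⟩
        · rintro ⟨m, hm0, hm2, hacc⟩
          interval_cases m
          · left; simpa using hacc
          · right; simpa using hacc
    · -- c4
      intro u hu q f₁ q' f₂ q'' ha hb
      rw [mem_cycAnn_iff] at ha hb ⊢
      obtain ⟨n₁, hn₁, g₁, hs₁, hg₁0, hg₁n, hi₁⟩ := ha
      obtain ⟨n₂, hn₂, g₂, hs₂, hg₂0, hg₂n, hi₂⟩ := hb
      refine ⟨n₁ + n₂, by omega,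
        fun m => if m ≤ n₁ then g₁ m else g₂ (m - n₁), ?_, by simp [hg₁0], ?_, ?_⟩
      · intro m hm
        dsimp only
        rcases lt_trichotomy m n₁ with h | h | h
        · have e1 : (if m ≤ n₁ then g₁ m else g₂ (m - n₁)) = g₁ m := by
            rw [if_pos (Nat.le_of_lt h)]
          have e2 : (if m + 1 ≤ n₁ then g₁ (m + 1) else g₂ (m + 1 - n₁)) = g₁ (m + 1) := by
            rw [if_pos (by omega)]
          rw [e1, e2]
          exact hs₁ m h
        · subst h
          have e1 : (if m ≤ m then g₁ m else g₂ (m - m)) = g₁ m := by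
            rw [if_pos (le_refl m)]
          have e2 : (if m + 1 ≤ m then g₁ (m + 1) else g₂ (m + 1 - m)) = g₂ 1 := by
            rw [if_neg (by omega)]
            congr 1
            omega
          rw [e1, e2]
          have := hs₂ 0 (by omega)
          rw [hg₂0, ← hg₁n] at this
          exact this
        · have e1 : (if m ≤ n₁ then g₁ m else g₂ (m - n₁)) = g₂ (m - n₁) := by
            simp [Nat.not_le.mpr h]
          have e2 : (if m + 1 ≤ n₁ then g₁ (m + 1) else g₂ (m + 1 - n₁)) = g₂ (m - n₁ + 1) := by
            rw [if_neg (by omega)]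
            congr 1
            omega
          rw [e1, e2]
          exact hs₂ (m - n₁) (by omega)
      · dsimp only
        rw [if_neg (by omega)]
        have : n₁ + n₂ - n₂ = n₁ := by omega
        have : n₁ + n₂ - n₁ = n₂ := by omega
        rw [this, hg₂n]
      · dsimp only
        simp only [Bool.or_eq_true, hi₁, hi₂]
        constructor
        · rintro (⟨m, hm0, hmn, hacc⟩ | ⟨m, hm0, hmn, hacc⟩)
          · exact ⟨m, hm0, by omega, by rw [if_pos hmn]; exact hacc⟩
          · refine ⟨n₁ + m, by omega, by omega, ?_⟩
            rw [if_neg (by omega)]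
            have : n₁ + m - n₁ = m := by omega
            rw [this]
            exact hacc
        · rintro ⟨m, hm0, hmn, hacc⟩
          by_cases h : m ≤ n₁
          · left
            exact ⟨m, hm0, h, by rwa [if_pos h] at hacc⟩
          · right
            refine ⟨m - n₁, by omega, by omega, ?_⟩
            rwa [if_neg h] at hacc
  · -- AnnAccepting
    intro u hu q hmem
    rw [mem_cycAnn_iff] at hmem
    obtain ⟨n, hn, g, hstep, hg0, hgn, hiff⟩ := hmem
    have hnoacc : ∀ m, 0 < m → m ≤ n → (g m).2 ∉ M.acc := by
      intro m hm0 hmn hacc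
      have : (false : Bool) = true := hiff.mpr ⟨m, hm0, hmn, hacc⟩
      simp at this
    set b : ℕ → ℕ × Q := fun m => g (m % n) with hb
    have hinf : IsInfPath γ b := by
      intro m
      have hr : m % n < n := Nat.mod_lt _ (by omega)
      have hmod : (m + 1) % n = (m % n + 1) % n := by
        conv_lhs => rw [← Nat.mod_add_mod]
      by_cases h : m % n + 1 = n
      · have h0 : (m + 1) % n = 0 := by rw [hmod, h, Nat.mod_self]
        have := hstep (m % n) hr
        rw [h, hgn, ← hg0] at this
        simpa [hb, h0] using this
      · have h0 : (m + 1) % n = m % n + 1 := by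
          rw [hmod, Nat.mod_eq_of_lt (by omega)]
        have := hstep (m % n) hr
        simpa [hb, h0] using this
    obtain ⟨fst, hfacc, hall⟩ := hγ.2.2 b hinf
    obtain ⟨m, -, heq⟩ := hall 0
    have hr : m % n < n := Nat.mod_lt _ (by omega)
    by_cases h : m % n = 0
    · have : (g n).2 = fst := by
        rw [hgn]
        have : (b m).2 = (g 0).2 := by rw [hb]; simp [h]
        rw [heq] at this
        rw [hg0] at this
        simp at this ⊢
        exact this.symm
      exact hnoacc n (by omega) (le_refl n) (this ▸ hfacc)
    · have : (g (m % n)).2 = fst := heq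
      exact hnoacc (m % n) (by omega) (by omega) (this ▸ hfacc)
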